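/- arXiv:2007.05210 — 6 statements merged into one kernel-verified Lean document; each statement's English description precedes it below -/
import Mathlib

section
/- A pseudocompact c_c-realcompact space is compact. That is, if X is a topological space in which every continuous real-valued function is bounded, and every c-stable family of closed sets in X with the finite intersection property has nonempty intersection, then X is compact. -/
open Set

def CStable {X : Type*} [TopologicalSpace X] (F : Set (Set X)) : Prop :=
  ∀ f : C(X, ℤ), ∃ F₀ ∈ F, ∃ n : ℕ, ∀ x ∈ F₀, |f x| ≤ (n : ℤ)

def FIP {X : Type*} (F : Set (Set X)) : Prop :=
  ∀ S : Finset (Set X), ↑S ⊆ F → (⋂₀ (S : Set (Set X))).Nonempty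

def CcRealcompact (X : Type*) [TopologicalSpace X] : Prop :=
  ∀ F : Set (Set X), (∀ A ∈ F, IsClosed A) → CStable F → FIP F → (⋂₀ F).Nonempty

/-- A pseudocompact c_c-realcompact space is compact. -/
theorem pseudocompact_cc_realcompact_implies_compact {X : Type*} [TopologicalSpace X]
    (hpseudo : ∀ f : C(X, ℝ), ∃ M : ℝ, ∀ x, |f x| ≤ M)
    (hcc : CcRealcompact X) : CompactSpace X := by
  classical
  -- every continuous ℤ-valued function is bounded
  have hzbd : ∀ f : C(X, ℤ), ∃ n : ℕ, ∀ x, |f x| ≤ (n : ℤ) := by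
    intro f
    obtain ⟨M, hM⟩ := hpseudo ⟨fun x => (f x : ℝ), by fun_prop⟩
    refine ⟨⌈M⌉₊, fun x => ?_⟩
    have h1 : ((|f x| : ℤ) : ℝ) ≤ M := by
      have := hM x
      push_cast at this ⊢
      simpa using this
    exact_mod_cast h1.trans (Nat.le_ceil M)
  -- any nonempty family with FIP of closed sets has nonempty intersection
  have key : ∀ F : Set (Set X), F.Nonempty → (∀ A ∈ F, IsClosed A) → FIP F →
      (⋂₀ F).Nonempty := by
    intro F ⟨F₀, hF₀⟩ hcl hfip
    refine hcc F hcl ?_ hfip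
    intro f
    obtain ⟨n, hn⟩ := hzbd f
    exact ⟨F₀, hF₀, n, fun x _ => hn x⟩
  constructor
  apply isCompact_of_finite_subfamily_closed
  intro ι t htcl hempty
  by_contra hcon
  push_neg at hcon
  have hιne : Nonempty ι := by
    by_contra hι
    rw [not_nonempty_iff] at hι
    obtain ⟨x, hx⟩ := hcon ∅
    have : x ∈ univ ∩ ⋂ i, t i := ⟨trivial, by simp [iInter_of_empty]⟩
    rw [hempty] at this
    exact this
  have hfip : FIP (Set.range t) := by
    intro S hS
    set u : Finset ι := S.attach.image
      (fun A => (hS A.2).choose) with hu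
    obtain ⟨x, hx⟩ := hcon u
    refine ⟨x, ?_⟩
    intro A hA
    have hiA : (hS hA).choose ∈ u := Finset.mem_image.mpr ⟨⟨A, hA⟩, Finset.mem_attach _ _, rfl⟩
    have hxA : x ∈ t ((hS hA).choose) := by
      have := hx.2
      simp only [mem_iInter] at this
      exact this _ hiA
    rwa [(hS hA).choose_spec] at hxA
  obtain ⟨x, hx⟩ := key (Set.range t) (range_nonempty t)
    (by rintro A ⟨i, rfl⟩; exact htcl i) hfip
  have : x ∈ univ ∩ ⋂ i, t i := ⟨trivial, by
    simp only [mem_iInter]; exact fun i => hx _ ⟨i, rfl⟩⟩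
  rw [hempty] at this
  exact this
end

section
/- A closed subspace of a c_c-realcompact space is c_c-realcompact. -/
open Set

/-- A closed subspace of a c_c-realcompact space is c_c-realcompact. -/
theorem closed_subspace_cc_realcompact {X : Type*} [TopologicalSpace X]
    (hcc : CcRealcompact X) (A : Set X) (hA : IsClosed A) :
    CcRealcompact A := by
  intro F hclosed hcs hfip
  obtain ⟨a0, _⟩ := hfip ∅ (by simp)
  set G : Set (Set X) := (fun B => Subtype.val '' B) '' F with hG
  have hGmem : ∀ B ∈ F, Subtype.val '' B ∈ G := fun B hB => ⟨B, hB, rfl⟩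
  have h1 : ∀ C ∈ G, IsClosed C := by
    rintro C ⟨B, hB, rfl⟩
    exact hA.isClosedEmbedding_subtypeVal.isClosedMap _ (hclosed B hB)
  have h2 : CStable G := by
    intro f
    obtain ⟨B, hB, n, hn⟩ := hcs (f.comp ⟨Subtype.val, continuous_subtype_val⟩)
    refine ⟨Subtype.val '' B, hGmem B hB, n, ?_⟩
    rintro x ⟨b, hb, rfl⟩
    exact hn b hb
  have h3 : FIP G := by
    classical
    intro S hS
    have hS' : ↑(S.image (fun C => Subtype.val ⁻¹' C : Set X → Set A)) ⊆ F := by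
      intro B hB
      rw [Finset.coe_image] at hB
      obtain ⟨C, hC, rfl⟩ := hB
      obtain ⟨B₀, hB₀, rfl⟩ := hS hC
      simpa [Subtype.val_injective.preimage_image] using hB₀
    obtain ⟨a, ha⟩ := hfip _ hS'
    refine ⟨a, ?_⟩
    intro C hC
    have := ha (Subtype.val ⁻¹' C)
      (by rw [Finset.coe_image]; exact mem_image_of_mem _ hC)
    exact this
  obtain ⟨x, hx⟩ := hcc G h1 h2 h3
  rcases eq_empty_or_nonempty F with rfl | ⟨B, hB⟩
  · exact ⟨a0, by simp⟩
  · have hxA : x ∈ A := by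
      obtain ⟨b, hb, rfl⟩ := hx _ (hGmem B hB)
      exact b.2
    refine ⟨⟨x, hxA⟩, ?_⟩
    intro B' hB'
    obtain ⟨b, hb, hbx⟩ := hx _ (hGmem B' hB')
    have hb' : b = ⟨x, hxA⟩ := Subtype.ext hbx
    rwa [← hb']
end

section
/- An arbitrary product of c_c-realcompact spaces is c_c-realcompact. -/
open Set Filter Topology

/-- An arbitrary product of c_c-realcompact spaces is c_c-realcompact. -/
theorem prod_cc_realcompact {I : Type*} {X : I → Type*} [∀ i, TopologicalSpace (X i)]
    (hcc : ∀ i, CcRealcompact (X i)) : CcRealcompact (∀ i, X i) := by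
  intro F hclosed hstab hfip
  -- The filter generated by F is proper, by the finite intersection property.
  have hne : (Filter.generate F).NeBot := by
    rw [Filter.generate_neBot_iff]
    intro t hts htfin
    have := hfip htfin.toFinset (by simpa [htfin.coe_toFinset] using hts)
    simpa [htfin.coe_toFinset] using this
  -- Extend to an ultrafilter U containing F.
  let U : Ultrafilter (∀ i, X i) := Ultrafilter.of (Filter.generate F)
  have hFU : ∀ A ∈ F, A ∈ U := fun A hA =>
    Ultrafilter.of_le (Filter.generate F) (Filter.mem_generate_of_mem hA)
  -- Push forward to each factor.
  let Ui : ∀ i, Ultrafilter (X i) := fun i => U.map (fun y => y i)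
  -- The family of closures of members of Ui is closed, c-stable, with FIP.
  have key : ∀ i, ∃ x : X i, ∀ B ∈ Ui i, x ∈ closure B := by
    intro i
    set G : Set (Set (X i)) := {A | ∃ B ∈ Ui i, A = closure B} with hG
    have hGclosed : ∀ A ∈ G, IsClosed A := by
      rintro A ⟨B, _, rfl⟩; exact isClosed_closure
    have hGstab : CStable G := by
      intro g
      obtain ⟨F₀, hF₀, n, hn⟩ :=
        hstab (g.comp ⟨fun y => y i, continuous_apply i⟩)
      refine ⟨closure ((fun y => y i) '' F₀), ⟨_, ?_, rfl⟩, n, ?_⟩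
      · exact Filter.mem_map.2 (Filter.mem_of_superset (hFU F₀ hF₀)
          (Set.subset_preimage_image _ _))
      · intro x hx
        have hsub : (fun y => y i) '' F₀ ⊆ {x | |g x| ≤ (n : ℤ)} := by
          rintro _ ⟨y, hy, rfl⟩; exact hn y hy
        have hcl : IsClosed {x : X i | |g x| ≤ (n : ℤ)} :=
          (isClosed_discrete {m : ℤ | |m| ≤ (n : ℤ)}).preimage g.continuous
        exact closure_minimal hsub hcl hx
    have hGfip : FIP G := by
      intro S hS
      have hmem : ⋂₀ (S : Set (Set (X i))) ∈ Ui i := by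
        refine (Filter.sInter_mem S.finite_toSet).2 ?_
        intro A hA
        obtain ⟨B, hB, rfl⟩ := hS hA
        exact Filter.mem_of_superset hB subset_closure
      exact Filter.nonempty_of_mem hmem
    obtain ⟨x, hx⟩ := hcc i G hGclosed hGstab hGfip
    exact ⟨x, fun B hB => hx _ ⟨B, hB, rfl⟩⟩
  choose x hx using key
  -- Each Ui converges to x i.
  have hconv : ∀ i, (Ui i : Filter (X i)) ≤ 𝓝 (x i) := by
    intro i s hs
    by_contra hns
    have hc : sᶜ ∈ Ui i := (Ultrafilter.compl_mem_iff_notMem).2 hns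
    have := mem_closure_iff_nhds.1 (hx i sᶜ hc) s hs
    simp at this
  -- Hence U converges to x.
  have hle : (U : Filter (∀ i, X i)) ≤ 𝓝 x := by
    rw [nhds_pi, Filter.le_pi]
    exact hconv
  refine ⟨x, fun A hA => ?_⟩
  have : x ∈ closure A := by
    rw [mem_closure_iff_nhds]
    intro t ht
    exact Filter.nonempty_of_mem (Filter.inter_mem (hle ht) (hFU A hA))
  rwa [(hclosed A hA).closure_eq] at this
end

section
/- If a topological space X equals E ∪ F where E is compact and F is a ℤ-embedded c_c-realcompact subspace of X (every continuous map F → ℤ extends to a continuous map X → ℤ), then X is c_c-realcompact. -/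
open Set

/-- If X = E ∪ F with E compact and F a ℤ-embedded c_c-realcompact subspace,
then X is c_c-realcompact. -/
theorem union_compact_zembedded_cc_realcompact {X : Type*} [TopologicalSpace X]
    (E F : Set X) (hunion : E ∪ F = univ) (hE : IsCompact E)
    (hZemb : ∀ f : C(F, ℤ), ∃ g : C(X, ℤ), ∀ x : F, g x = f x)
    (hF : CcRealcompact F) : CcRealcompact X := by
  classical
  intro G hGclosed hGstable hGfip
  by_cases hcase : ∀ S : Finset (Set X), ↑S ⊆ G → ((⋂₀ (S : Set (Set X))) ∩ E).Nonempty
  · -- compactness case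
    have := hE.inter_iInter_nonempty (fun A : G => (A : Set X))
      (fun A => hGclosed A A.2)
      (by
        intro u
        obtain ⟨x, hx⟩ := hcase (u.image (fun A : G => (A : Set X)))
          (by
            intro t ht
            simp only [Finset.coe_image, Set.mem_image] at ht
            obtain ⟨A, _, rfl⟩ := ht
            exact A.2)
        refine ⟨x, hx.2, ?_⟩
        simp only [Set.mem_iInter]
        intro A hA
        exact hx.1 _ (by simp only [Finset.coe_image]; exact ⟨A, hA, rfl⟩))
    obtain ⟨x, hxE, hx⟩ := this
    simp only [Set.mem_iInter] at hx
    exact ⟨x, fun A hA => hx ⟨A, hA⟩⟩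
  · push_neg at hcase
    obtain ⟨S, hSG, hSE⟩ := hcase
    set K : Set X := ⋂₀ (S : Set (Set X)) with hK
    have hKF : K ⊆ F := by
      intro x hxK
      have hx : x ∈ E ∪ F := hunion ▸ Set.mem_univ x
      rcases hx with hx | hx
      · exact absurd (Set.mem_inter hxK hx) (by rw [hSE]; exact notMem_empty x)
      · exact hx
    have hKclosed : IsClosed K := isClosed_sInter (fun A hA => hGclosed A (hSG hA))
    set G' : Set (Set X) := insert K G with hG'
    have hG'closed : ∀ A ∈ G', IsClosed A := by
      rintro A (rfl | hA)
      · exact hKclosed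
      · exact hGclosed A hA
    have hG'fip : FIP G' := by
      intro T hT
      obtain ⟨x, hx⟩ := hGfip ((T.erase K) ∪ S)
        (by
          intro t ht
          rw [Finset.coe_union] at ht
          rcases ht with ht | ht
          · rcases hT (Finset.erase_subset K T ht) with rfl | h
            · exact absurd (by exact_mod_cast ht) (Finset.notMem_erase _ _)
            · exact h
          · exact hSG ht)
      refine ⟨x, ?_⟩
      intro t ht
      by_cases htK : t = K
      · subst htK
        intro A hA
        exact hx A (by rw [Finset.coe_union]; exact Or.inr hA)
      · exact hx t (by rw [Finset.coe_union]; exact Or.inl (Finset.mem_erase.mpr ⟨htK, ht⟩))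
    -- family on F
    set H : Set (Set F) := (fun A : Set X => (Subtype.val ⁻¹' A : Set F)) '' G' with hH
    have hHclosed : ∀ B ∈ H, IsClosed B := by
      rintro B ⟨A, hA, rfl⟩
      exact (hG'closed A hA).preimage continuous_subtype_val
    have hHstable : CStable H := by
      intro f
      obtain ⟨g, hg⟩ := hZemb f
      obtain ⟨A, hA, n, hn⟩ := hGstable g
      refine ⟨Subtype.val ⁻¹' A, ⟨A, Or.inr hA, rfl⟩, n, ?_⟩
      intro x hx
      rw [← hg x]
      exact hn x hx
    have hHfip : FIP H := by
      intro T hT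
      have hchoose : ∀ t ∈ T, ∃ A, A ∈ G' ∧ (Subtype.val ⁻¹' A : Set F) = t := by
        intro t ht
        obtain ⟨A, hA, hAt⟩ := hT ht
        exact ⟨A, hA, hAt⟩
      set h : Set F → Set X := fun t =>
        if hx : ∃ A, A ∈ G' ∧ (Subtype.val ⁻¹' A : Set F) = t then hx.choose else K with hh
      have hht : ∀ t ∈ T, h t ∈ G' ∧ (Subtype.val ⁻¹' (h t) : Set F) = t := by
        intro t ht
        have hex := hchoose t ht
        simp only [hh, dif_pos hex]
        exact hex.choose_spec
      obtain ⟨x, hx⟩ := hG'fip (insert K (T.image h))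
        (by
          intro t ht
          rw [Finset.coe_insert] at ht
          rcases ht with rfl | ht
          · exact Or.inl rfl
          · simp only [Finset.coe_image, Set.mem_image] at ht
            obtain ⟨s, hs, rfl⟩ := ht
            exact (hht s (by exact_mod_cast hs)).1)
      have hxK : x ∈ K := hx K (by rw [Finset.coe_insert]; exact Or.inl rfl)
      refine ⟨⟨x, hKF hxK⟩, ?_⟩
      intro t ht
      rw [← (hht t ht).2]
      exact hx (h t)
        (by rw [Finset.coe_insert]; exact Or.inr (by
          simp only [Finset.coe_image, Set.mem_image]; exact ⟨t, ht, rfl⟩))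
    obtain ⟨x, hx⟩ := hF H hHclosed hHstable hHfip
    refine ⟨(x : X), ?_⟩
    intro A hA
    exact hx (Subtype.val ⁻¹' A) ⟨A, Or.inr hA, rfl⟩
end

section
/- A ℤ-embedded c_c-realcompact subset of a Hausdorff space is closed. -/
open Set

/-- A ℤ-embedded c_c-realcompact subset of a Hausdorff space is closed. -/
theorem zembedded_cc_realcompact_isClosed {X : Type*} [TopologicalSpace X] [T2Space X]
    (A : Set X)
    (hZemb : ∀ f : C(A, ℤ), ∃ g : C(X, ℤ), ∀ x : A, g x = f x)
    (hA : CcRealcompact A) : IsClosed A := by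
  refine isClosed_of_closure_subset fun p hp => ?_
  classical
  set F : Set (Set A) := {s | ∃ V ∈ nhds p, (Subtype.val ⁻¹' closure V : Set A) = s} with hF
  have hclosed : ∀ s ∈ F, IsClosed s := by
    rintro s ⟨V, -, rfl⟩
    exact isClosed_closure.preimage continuous_subtype_val
  have hstable : CStable F := by
    intro f
    obtain ⟨g, hg⟩ := hZemb f
    refine ⟨Subtype.val ⁻¹' closure (g ⁻¹' {g p}), ⟨g ⁻¹' {g p}, ?_, rfl⟩, (g p).natAbs, ?_⟩
    · exact (isOpen_discrete _).preimage g.continuous |>.mem_nhds rfl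
    · intro x hx
      have hcl : closure (g ⁻¹' ({g p} : Set ℤ)) = g ⁻¹' {g p} :=
        ((isClosed_discrete _).preimage g.continuous).closure_eq
      have : g x = g p := by
        have := hx
        rw [mem_preimage, hcl] at this
        exact this
      rw [← hg x, this, Nat.cast_natAbs]
      simp
  have hfip : FIP F := by
    intro S hS
    have key : ∀ s ∈ (S : Set (Set A)), ∃ V, V ∈ nhds p ∧ (Subtype.val ⁻¹' closure V : Set A) = s := by
      intro s hs
      obtain ⟨V, hV, hVs⟩ := hS hs
      exact ⟨V, hV, hVs⟩
    choose! V hV hVs using key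
    have hW : (⋂ s ∈ S, V s) ∈ nhds p := (Filter.biInter_finset_mem S).2 fun s hs => hV s hs
    obtain ⟨a, haW, haA⟩ := mem_closure_iff_nhds.mp hp _ hW
    refine ⟨⟨a, haA⟩, ?_⟩
    intro s hs
    rw [← hVs s hs]
    exact subset_closure (by simpa using mem_iInter₂.mp haW s hs)
  obtain ⟨a, ha⟩ := hA F hclosed hstable hfip
  have : (a : X) = p := by
    by_contra hne
    obtain ⟨U, V, hU, hV, haU, hpV, hUV⟩ := t2_separation hne
    have hmem : a ∈ (Subtype.val ⁻¹' closure V : Set A) :=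
      ha _ ⟨V, hV.mem_nhds hpV, rfl⟩
    have : (a : X) ∈ closure V := hmem
    obtain ⟨y, hyU, hyV⟩ := mem_closure_iff_nhds.mp this U (hU.mem_nhds haU)
    exact hUV.le_bot ⟨hyU, hyV⟩
  rw [← this]
  exact a.2
end

section
/- Let θ be an infinite cardinal and suppose X is not finally θ-compact. Let B be a family of closed sets such that all subfamilies of cardinality < θ have nonempty intersection but ∩B = ∅, and let D be the family of all intersections of fewer than θ members of B. Then D is a c_{P_θ}-stable family of closed sets with the finite intersection property and empty intersection, where P_θ is the ideal of closed finally θ-compact subsets of X. Consequently X is not c_{P_θ}-compact. -/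
open Set

universe u

def FinallyCompact (θ : Cardinal.{u}) (X : Type u) [TopologicalSpace X] : Prop :=
  ∀ 𝒰 : Set (Set X), (∀ U ∈ 𝒰, IsOpen U) → ⋃₀ 𝒰 = univ →
    ∃ 𝒱 ⊆ 𝒰, Cardinal.mk 𝒱 < θ ∧ ⋃₀ 𝒱 = univ

def CPStable {X : Type*} [TopologicalSpace X] (P : Set (Set X)) (F : Set (Set X)) : Prop :=
  ∀ f : C(X, ℤ), closure {x | f x ≠ 0} ∈ P → ∃ F₀ ∈ F, ∃ n : ℕ, ∀ x ∈ F₀, |f x| ≤ (n : ℤ)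

def CPCompact {X : Type*} [TopologicalSpace X] (P : Set (Set X)) : Prop :=
  ∀ F : Set (Set X), (∀ A ∈ F, IsClosed A) → CPStable P F → FIP F → (⋂₀ F).Nonempty

/-- The ideal of closed, finally θ-compact subsets of `X`. -/
def Ptheta (θ : Cardinal.{u}) (X : Type u) [TopologicalSpace X] : Set (Set X) :=
  {A : Set X | IsClosed A ∧ FinallyCompact θ A}

theorem not_finallyCompact_D_cPtheta_stable {θ : Cardinal.{u}} (hθ : Cardinal.aleph0 ≤ θ)
    {X : Type u} [TopologicalSpace X] (hX : ¬ FinallyCompact θ X)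
    (B : Set (Set X)) (hBclosed : ∀ A ∈ B, IsClosed A)
    (hBsmall : ∀ B₀ ⊆ B, Cardinal.mk B₀ < θ → (⋂₀ B₀).Nonempty)
    (hBempty : ⋂₀ B = ∅)
    (D : Set (Set X))
    (hD : D = {A : Set X | ∃ B₀ ⊆ B, Cardinal.mk B₀ < θ ∧ A = ⋂₀ B₀}) :
    (∀ A ∈ D, IsClosed A) ∧ CPStable (Ptheta θ X) D ∧ FIP D ∧ ⋂₀ D = ∅ ∧
      ¬ CPCompact (Ptheta θ X) := by
  subst hD
  have hzero : (0 : Cardinal.{u}) < θ := lt_of_lt_of_le Cardinal.aleph0_pos hθ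
  -- closedness
  have hclosed : ∀ A ∈ {A : Set X | ∃ B₀ ⊆ B, Cardinal.mk B₀ < θ ∧ A = ⋂₀ B₀},
      IsClosed A := by
    rintro A ⟨B₀, hB₀, -, rfl⟩
    exact isClosed_sInter fun A hA => hBclosed A (hB₀ hA)
  -- stability
  have hstable : CPStable (Ptheta θ X)
      {A : Set X | ∃ B₀ ⊆ B, Cardinal.mk B₀ < θ ∧ A = ⋂₀ B₀} := by
    intro f hf
    obtain ⟨hKc, hKcomp⟩ := hf
    set K := closure {x | f x ≠ 0} with hK
    set 𝒰 : Set (Set K) := (fun A => Subtype.val ⁻¹' Aᶜ) '' B with h𝒰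
    have hopen : ∀ U ∈ 𝒰, IsOpen U := by
      rintro U ⟨A, hA, rfl⟩
      exact (hBclosed A hA).isOpen_compl.preimage continuous_subtype_val
    have hcov : ⋃₀ 𝒰 = univ := by
      ext x
      simp only [mem_sUnion, mem_univ, iff_true, h𝒰, mem_image]
      have hx : (x : X) ∉ ⋂₀ B := by rw [hBempty]; exact notMem_empty _
      simp only [mem_sInter, not_forall] at hx
      obtain ⟨A, hA, hxA⟩ := hx
      exact ⟨_, ⟨A, hA, rfl⟩, hxA⟩
    obtain ⟨𝒱, h𝒱sub, h𝒱card, h𝒱cov⟩ := hKcomp 𝒰 hopen hcov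
    choose g hg1 hg2 using fun (V : 𝒱) => h𝒱sub V.2
    refine ⟨⋂₀ range g, ⟨range g, range_subset_iff.2 hg1,
      lt_of_le_of_lt Cardinal.mk_range_le h𝒱card, rfl⟩, 0, ?_⟩
    intro x hx
    have hfx : f x = 0 := by
      by_contra hfx
      have hxK : x ∈ K := subset_closure hfx
      have : (⟨x, hxK⟩ : K) ∈ ⋃₀ 𝒱 := h𝒱cov ▸ mem_univ _
      obtain ⟨V, hV, hxV⟩ := this
      have h2 : Subtype.val ⁻¹' (g ⟨V, hV⟩)ᶜ = V := hg2 ⟨V, hV⟩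
      rw [← h2] at hxV
      exact hxV (hx _ (mem_range_self (⟨V, hV⟩ : 𝒱)))
    simp [hfx]
  -- FIP
  have hfip : FIP {A : Set X | ∃ B₀ ⊆ B, Cardinal.mk B₀ < θ ∧ A = ⋂₀ B₀} := by
    classical
    intro S hS
    have key : ∀ T : Finset (Set X), ↑T ⊆ {A : Set X | ∃ B₀ ⊆ B, Cardinal.mk B₀ < θ ∧ A = ⋂₀ B₀} →
        ∃ B₀ ⊆ B, Cardinal.mk B₀ < θ ∧ ⋂₀ B₀ ⊆ ⋂₀ (T : Set (Set X)) := by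
      intro T
      induction T using Finset.induction_on with
      | empty =>
        intro _
        exact ⟨∅, empty_subset _, by simpa using hzero, by simp⟩
      | @insert A T hA ih =>
        intro hT
        have hTsub : ↑T ⊆ {A : Set X | ∃ B₀ ⊆ B, Cardinal.mk B₀ < θ ∧ A = ⋂₀ B₀} := by
          intro x hx; exact hT (by simp [hx])
        obtain ⟨B₁, hB₁, hB₁c, hB₁i⟩ := ih hTsub
        obtain ⟨B₂, hB₂, hB₂c, hB₂i⟩ := hT (Finset.mem_insert_self A T)
        refine ⟨B₁ ∪ B₂, union_subset hB₁ hB₂, ?_, ?_⟩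
        · exact lt_of_le_of_lt (Cardinal.mk_union_le _ _) (Cardinal.add_lt_of_lt hθ hB₁c hB₂c)
        · rw [Finset.coe_insert, sInter_insert, sInter_union]
          exact subset_inter (hB₂i ▸ inter_subset_right) (inter_subset_left.trans hB₁i)
    obtain ⟨B₀, hB₀, hB₀c, hB₀i⟩ := key S hS
    exact (hBsmall B₀ hB₀ hB₀c).mono hB₀i
  -- empty intersection
  have hempty : ⋂₀ {A : Set X | ∃ B₀ ⊆ B, Cardinal.mk B₀ < θ ∧ A = ⋂₀ B₀} = ∅ := by
    rw [← hBempty]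
    apply subset_antisymm
    · intro x hx A hA
      have : A ∈ {A : Set X | ∃ B₀ ⊆ B, Cardinal.mk B₀ < θ ∧ A = ⋂₀ B₀} := by
        refine ⟨{A}, by simpa using hA, by simpa using Cardinal.one_lt_aleph0.trans_le hθ, by simp⟩
      have := hx _ this
      simpa using this
    · rw [hBempty]; exact empty_subset _
  refine ⟨hclosed, hstable, hfip, hempty, ?_⟩
  intro hcpc
  have := hcpc _ hclosed hstable hfip
  rw [hempty] at this
  exact this.ne_empty rfl
end
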